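/- Let F : ℕ → A be finitely supported (F(k) = 0 for all but finitely many k), representing the element Σ_k F(k)·x^k of the non-unital skew polynomial ring A[x; σ̃, 0]. Then for every finitely supported G : ℕ → A and every m ∈ ℕ one has Σ_{k=0}^{m} F(k)·σ̃^k(G(m−k)) = Σ_{k=0}^{m} G(k)·σ̃^k(F(m−k)) (i.e. Σ_k F(k)·x^k lies in the center of A[x; σ̃, 0]) if and only if for every k ∈ ℕ, F(k) vanishes on Sep^k(J) and σ̃(F(k)) = F(k). -/

import Mathlib

theorem stmt13 (J : Type*) [Countable J] (σ : J ≃ J)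
    (F : ℕ → J →₀ ℝ) (hF : (Function.support F).Finite) :
    (∀ G : ℕ → J →₀ ℝ, (Function.support G).Finite → ∀ m : ℕ,
        ∑ k ∈ Finset.range (m + 1), F k * Finsupp.equivMapDomain (σ ^ k) (G (m - k)) =
          ∑ k ∈ Finset.range (m + 1), G k * Finsupp.equivMapDomain (σ ^ k) (F (m - k))) ↔
      (∀ k : ℕ, (∀ x : J, (σ ^ k) x ≠ x → F k x = 0) ∧
        Finsupp.equivMapDomain σ (F k) = F k) := by
  classical
  constructor
  · intro H k
    have hvan : ∀ x : J, (σ ^ k) x ≠ x → F k x = 0 := by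
      intro x hx
      set G : ℕ → J →₀ ℝ := fun n => if n = 0 then Finsupp.single x 1 else 0 with hGdef
      have hGfin : (Function.support G).Finite := by
        apply Set.Finite.subset (Set.finite_singleton 0)
        intro n hn
        rcases eq_or_ne n 0 with rfl | hne
        · exact Set.mem_singleton _
        · exact absurd (by simp [hGdef, hne]) hn
      have key := congrArg (fun f : J →₀ ℝ => f x) (H G hGfin k)
      simp only [Finsupp.finset_sum_apply, Finsupp.mul_apply,
        Finsupp.equivMapDomain_apply] at key
      rw [Finset.sum_eq_zero, Finset.sum_eq_single 0] at key
      · have h0 : G 0 = Finsupp.single x 1 := by simp [hGdef]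
        rw [h0] at key
        simp only [Nat.sub_zero, pow_zero] at key
        simpa [Equiv.Perm.one_symm] using key.symm
      · intro b _ hb
        have : G b = 0 := by simp [hGdef, hb]
        simp [this]
      · intro h0
        exact absurd (Finset.mem_range.mpr (Nat.succ_pos k)) h0
      · intro j hj
        rcases eq_or_ne j k with rfl | hjk
        · have h0 : G (j - j) = Finsupp.single x 1 := by simp [hGdef]
          rw [h0]
          have hne : (σ ^ j).symm x ≠ x := by
            intro hc
            apply hx
            conv_lhs => rw [← hc]
            exact (σ ^ j).apply_symm_apply x
          rw [Finsupp.single_eq_of_ne' (Ne.symm hne), mul_zero]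
        · have : k - j ≠ 0 := by
            have := Finset.mem_range.mp hj
            omega
          have h0 : G (k - j) = 0 := by simp [hGdef, this]
          simp [h0]
    refine ⟨hvan, ?_⟩
    ext y
    rw [Finsupp.equivMapDomain_apply]
    set G : ℕ → J →₀ ℝ := fun n => if n = 1 then Finsupp.single y 1 else 0 with hGdef
    have hGfin : (Function.support G).Finite := by
      apply Set.Finite.subset (Set.finite_singleton 1)
      intro n hn
      rcases eq_or_ne n 1 with rfl | hne
      · exact Set.mem_singleton _
      · exact absurd (by simp [hGdef, hne]) hn
    have key := congrArg (fun f : J →₀ ℝ => f y) (H G hGfin (k + 1))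
    simp only [Finsupp.finset_sum_apply, Finsupp.mul_apply,
      Finsupp.equivMapDomain_apply] at key
    rw [Finset.sum_eq_single k, Finset.sum_eq_single 1] at key
    · have h1 : G 1 = Finsupp.single y 1 := by simp [hGdef]
      have h2 : G (k + 1 - k) = Finsupp.single y 1 := by simp [hGdef]
      rw [h1, h2] at key
      have hk1 : k + 1 - 1 = k := by omega
      rw [hk1, pow_one, Finsupp.single_eq_same, one_mul] at key
      by_cases hfix : (σ ^ k) y = y
      · have hsymm : (σ ^ k).symm y = y := by
          rw [Equiv.symm_apply_eq]; exact hfix.symm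
        rw [hsymm, Finsupp.single_eq_same, mul_one] at key
        exact key.symm
      · have hne : (σ ^ k).symm y ≠ y := by
          intro hc
          apply hfix
          conv_lhs => rw [← hc]
          exact (σ ^ k).apply_symm_apply y
        rw [Finsupp.single_eq_of_ne' (Ne.symm hne), mul_zero] at key
        rw [← key, hvan y hfix]
    · intro b hb hb1
      have : G b = 0 := by simp [hGdef, hb1]
      simp [this]
    · intro h1
      exact absurd (Finset.mem_range.mpr (by omega)) h1
    · intro j hj hjk
      have hmem := Finset.mem_range.mp hj
      have : k + 1 - j ≠ 1 := by omega
      have h0 : G (k + 1 - j) = 0 := by simp [hGdef, this]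
      simp [h0]
    · intro hk
      exact absurd (Finset.mem_range.mpr (by omega)) hk
  · intro h G hG m
    have hkey : ∀ a : ℕ, ∀ x : J, F a (σ.symm x) = F a x := by
      intro a x
      rw [← Finsupp.equivMapDomain_apply σ (F a) x, (h a).2]
    have hinv : ∀ a n : ℕ, ∀ x : J, F a ((σ ^ n).symm x) = F a x := by
      intro a n
      induction n with
      | zero => intro x; simp [Equiv.Perm.one_symm]
      | succ n ih =>
        intro x
        have hstep : (σ ^ (n + 1)).symm x = (σ ^ n).symm (σ.symm x) := by
          rw [pow_succ']
          rfl
        rw [hstep, ih, hkey]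
    rw [← Finset.sum_range_reflect]
    apply Finset.sum_congr rfl
    intro j hj
    have hjm : j ≤ m := by
      have := Finset.mem_range.mp hj
      omega
    have hsimp : m + 1 - 1 - j = m - j := by omega
    rw [hsimp, Nat.sub_sub_self hjm]
    ext x
    simp only [Finsupp.mul_apply, Finsupp.equivMapDomain_apply]
    rw [hinv (m - j) j x]
    by_cases hx : F (m - j) x = 0
    · simp [hx]
    · have hfix : (σ ^ (m - j)) x = x := by
        by_contra hc
        exact hx ((h (m - j)).1 x hc)
      have hsymm : (σ ^ (m - j)).symm x = x := by
        rw [Equiv.symm_apply_eq]; exact hfix.symm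
      rw [hsymm, mul_comm]
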